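/- Theorem 1 (FDR control of single-step QuTE, positively dependent p-values): for every graph G and every level α ∈ (0,1), if the vector of N p-values is PRDS on each null and every null p-value is superuniform, then the single-step QuTE procedure (c = 1) at level α satisfies FDR ≤ α·|H^0|/N. -/

import Mathlib

open MeasureTheory ProbabilityTheory Finset

open Classical in
/-- The Benjamini–Hochberg count `k̂_α(P)`: the largest `k ∈ {0,…,N}` such that
at least `k` of the p-values are `≤ α k / N`, where `N` is the number of hypotheses. -/
noncomputable def bhCount {I : Type*} [Fintype I] (α : ℝ) (P : I → ℝ) : ℕ :=
  Nat.findGreatest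
    (fun k => k ≤ (Finset.univ.filter fun i => P i ≤ α * k / (Fintype.card I)).card)
    (Fintype.card I)

open Classical in
/-- The Benjamini–Hochberg rejection set `Rej_α(P) = {i : P i ≤ α k̂_α(P) / N}`. -/
noncomputable def bhRej {I : Type*} [Fintype I] (α : ℝ) (P : I → ℝ) : Finset I :=
  Finset.univ.filter fun i => P i ≤ α * (bhCount α P) / (Fintype.card I)

open Classical in
/-- The p-value vector `P^{b,c}` known to node `b` after `c` rounds of communication:
every p-value hosted at a node of graph distance more than `c` from `b` is replaced by `1`. -/
noncomputable def quteMasked {V : Type*} (G : SimpleGraph V) (n : V → ℕ)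
    (c : ℕ) (P : (Σ a : V, Fin (n a)) → ℝ) (b : V) : (Σ a : V, Fin (n a)) → ℝ :=
  fun i => if G.edist b i.1 ≤ c then P i else 1

open Classical in
/-- The rejection set of the `c`-step QuTE procedure at level `α`: hypothesis `j` at node `a`
is rejected iff some node `b` within graph distance `c` of `a` rejects it in its local BH test
at level `α` on the p-values it knows (unknown p-values set to `1`). -/
noncomputable def quteRej {V : Type*} [Fintype V] (G : SimpleGraph V) (n : V → ℕ)
    (c : ℕ) (α : ℝ) (P : (Σ a : V, Fin (n a)) → ℝ) : Finset (Σ a : V, Fin (n a)) :=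
  Finset.univ.filter fun i => ∃ b : V, G.edist i.1 b ≤ c ∧
    P i ≤ α * (bhCount α (quteMasked G n c P b)) / (Fintype.card (Σ a : V, Fin (n a)))

section BH
variable {I : Type*} [Fintype I] {α : ℝ}

lemma bhCount_le_card (α : ℝ) (P : I → ℝ) : bhCount α P ≤ Fintype.card I :=
  Nat.findGreatest_le _

open Classical in
lemma bhCount_spec (α : ℝ) (P : I → ℝ) :
    bhCount α P ≤ (Finset.univ.filter fun i => P i ≤ α * (bhCount α P) / (Fintype.card I)).card := by
  unfold bhCount
  exact Nat.findGreatest_spec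
    (P := fun k => k ≤ (Finset.univ.filter fun i => P i ≤ α * k / (Fintype.card I)).card)
    (m := 0) (Nat.zero_le _) (Nat.zero_le _)

open Classical in
lemma le_bhCount (α : ℝ) (P : I → ℝ) {m : ℕ} (hm : m ≤ Fintype.card I)
    (h : m ≤ (Finset.univ.filter fun i => P i ≤ α * m / (Fintype.card I)).card) :
    m ≤ bhCount α P :=
  Nat.le_findGreatest hm h

open Classical in
lemma filter_le_mono (hα : 0 ≤ α) (hN : 0 < Fintype.card I) (P : I → ℝ) {j j' : ℕ} (hj : j ≤ j') :
    (Finset.univ.filter fun i => P i ≤ α * j / (Fintype.card I)) ⊆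
      (Finset.univ.filter fun i => P i ≤ α * j' / (Fintype.card I)) := by
  intro i hi
  simp only [Finset.mem_filter, Finset.mem_univ, true_and] at *
  refine hi.trans ?_
  have hNR : (0:ℝ) < (Fintype.card I : ℝ) := by exact_mod_cast hN
  have : α * j ≤ α * j' := by
    apply mul_le_mul_of_nonneg_left (by exact_mod_cast hj) hα
  exact div_le_div_of_nonneg_right this hNR.le |>.trans_eq rfl

lemma card_bhRej (hα : 0 ≤ α) (hN : 0 < Fintype.card I) (P : I → ℝ) :
    (bhRej α P).card = bhCount α P := by
  classical
  refine le_antisymm ?_ ?_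
  · apply le_bhCount α P (le_trans (Finset.card_le_card (Finset.filter_subset _ _)) (by simp))
    refine le_trans (Finset.card_le_card ?_) le_rfl |>.trans
      (Finset.card_le_card (filter_le_mono hα hN P (bhCount_spec α P)))
    exact (bhRej α P).subset_of_eq rfl
  · exact (bhCount_spec α P).trans_eq rfl

open Classical in
lemma bhCount_anti (hα : 0 ≤ α) {P Q : I → ℝ} (h : P ≤ Q) : bhCount α Q ≤ bhCount α P := by
  unfold bhCount
  refine Nat.findGreatest_mono (fun k hk => hk.trans (Finset.card_le_card ?_)) le_rfl
  intro i hi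
  simp only [Finset.mem_filter, Finset.mem_univ, true_and] at *
  exact (h i).trans hi

end BH

section QuTE

variable {V : Type*} [Fintype V] (G : SimpleGraph V) (n : V → ℕ) {α : ℝ}

open Classical in
/-- max of local BH counts over the neighborhood of the node hosting `i`. -/
noncomputable def quteK (c : ℕ) (α : ℝ) (P : (Σ a : V, Fin (n a)) → ℝ)
    (i : (Σ a : V, Fin (n a))) : ℕ :=
  Finset.univ.sup fun b => if G.edist i.1 b ≤ c then bhCount α (quteMasked G n c P b) else 0

lemma quteK_le_card (c : ℕ) (α : ℝ) (P : (Σ a : V, Fin (n a)) → ℝ) (i) :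
    quteK G n c α P i ≤ Fintype.card (Σ a : V, Fin (n a)) := by
  classical
  apply Finset.sup_le
  intro b _
  split_ifs
  · exact bhCount_le_card _ _
  · exact Nat.zero_le _

/-- if `i` is rejected by QuTE then its p-value is below the threshold given by `quteK`. -/
lemma le_of_mem_quteRej (hα : 0 ≤ α) (hN : 0 < Fintype.card (Σ a : V, Fin (n a)))
    {c : ℕ} {P : (Σ a : V, Fin (n a)) → ℝ} {i : (Σ a : V, Fin (n a))}
    (h : i ∈ quteRej G n c α P) :
    P i ≤ α * (quteK G n c α P i) / (Fintype.card (Σ a : V, Fin (n a))) := by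
  classical
  rw [quteRej, Finset.mem_filter] at h
  obtain ⟨-, b, hb, hPb⟩ := h
  have h1 : bhCount α (quteMasked G n c P b) ≤ quteK G n c α P i := by
    refine le_trans ?_ (Finset.le_sup (Finset.mem_univ b))
    rw [if_pos hb]
  refine hPb.trans ?_
  have hNR : (0:ℝ) < (Fintype.card (Σ a : V, Fin (n a)) : ℝ) := by exact_mod_cast hN
  have : α * (bhCount α (quteMasked G n c P b) : ℝ) ≤ α * (quteK G n c α P i : ℝ) :=
    mul_le_mul_of_nonneg_left (by exact_mod_cast h1) hα
  exact div_le_div_of_nonneg_right this hNR.le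

lemma bhRej_masked_subset (hα0 : 0 ≤ α) (hα1 : α < 1)
    (hN : 0 < Fintype.card (Σ a : V, Fin (n a)))
    (c : ℕ) (P : (Σ a : V, Fin (n a)) → ℝ) (b : V) :
    bhRej α (quteMasked G n c P b) ⊆ quteRej G n c α P := by
  classical
  intro i hi
  rw [bhRej, Finset.mem_filter] at hi
  obtain ⟨-, hi⟩ := hi
  have hNR : (0:ℝ) < (Fintype.card (Σ a : V, Fin (n a)) : ℝ) := by exact_mod_cast hN
  have hthr : α * (bhCount α (quteMasked G n c P b) : ℝ) / (Fintype.card (Σ a : V, Fin (n a))) ≤ α := by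
    rw [div_le_iff₀ hNR]
    apply mul_le_mul_of_nonneg_left _ hα0
    exact_mod_cast bhCount_le_card _ _
  have hd : G.edist b i.1 ≤ c := by
    by_contra hd
    rw [quteMasked, if_neg hd] at hi
    linarith [hi.trans hthr]
  rw [quteMasked, if_pos hd] at hi
  rw [quteRej, Finset.mem_filter]
  exact ⟨Finset.mem_univ _, b, by rwa [SimpleGraph.edist_comm], hi⟩

lemma quteK_le_card_quteRej (hα0 : 0 ≤ α) (hα1 : α < 1)
    (hN : 0 < Fintype.card (Σ a : V, Fin (n a)))
    (c : ℕ) (P : (Σ a : V, Fin (n a)) → ℝ) (i) :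
    quteK G n c α P i ≤ (quteRej G n c α P).card := by
  classical
  apply Finset.sup_le
  intro b _
  split_ifs
  · rw [← card_bhRej hα0 hN]
    exact Finset.card_le_card (bhRej_masked_subset G n hα0 hα1 hN c P b)
  · exact Nat.zero_le _

lemma quteK_anti (hα : 0 ≤ α) (c : ℕ) {P Q : (Σ a : V, Fin (n a)) → ℝ} (h : P ≤ Q) (i) :
    quteK G n c α Q i ≤ quteK G n c α P i := by
  classical
  apply Finset.sup_mono_fun
  intro b _
  split_ifs
  · apply bhCount_anti hα
    intro j
    rw [quteMasked, quteMasked]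
    split_ifs
    · exact h j
    · exact le_rfl
  · exact le_rfl

end QuTE

section Meas

variable {I : Type*} [Fintype I]

lemma measurableSet_nat (s : Set ℕ) : MeasurableSet s := s.to_countable.measurableSet

open Classical in
lemma measurable_card_filter (c : ℝ) :
    Measurable (fun x : I → ℝ => (Finset.univ.filter fun i => x i ≤ c).card) := by
  classical
  simp only [Finset.card_filter]
  apply Finset.measurable_sum
  intro i _
  have hs : MeasurableSet {x : I → ℝ | x i ≤ c} :=
    measurableSet_le (measurable_pi_apply i) measurable_const
  exact Measurable.ite hs measurable_const measurable_const

open Classical in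
lemma measurable_bhCount (α : ℝ) : Measurable (fun x : I → ℝ => bhCount α x) := by
  classical
  apply measurable_to_countable'
  intro k
  have hpred : ∀ j : ℕ, MeasurableSet {x : I → ℝ |
      j ≤ (Finset.univ.filter fun i => x i ≤ α * j / (Fintype.card I)).card} := by
    intro j
    exact measurable_card_filter (α * j / (Fintype.card I)) (measurableSet_nat {t | j ≤ t})
  have : (fun x : I → ℝ => bhCount α x) ⁻¹' {k} =
      {x : I → ℝ | k ≤ Fintype.card I} ∩
      {x : I → ℝ | k ≠ 0 → k ≤ (Finset.univ.filter fun i => x i ≤ α * k / (Fintype.card I)).card} ∩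
      ⋂ m : ℕ, {x : I → ℝ | k < m → m ≤ Fintype.card I →
        ¬ m ≤ (Finset.univ.filter fun i => x i ≤ α * m / (Fintype.card I)).card} := by
    ext x
    simp only [Set.mem_preimage, Set.mem_singleton_iff, bhCount, Nat.findGreatest_eq_iff,
      Set.mem_inter_iff, Set.mem_setOf_eq, Set.mem_iInter]
    tauto
  rw [this]
  refine MeasurableSet.inter (MeasurableSet.inter ?_ ?_) (MeasurableSet.iInter fun m => ?_)
  · by_cases h : k ≤ Fintype.card I <;> simp [h]
  · by_cases h : k = 0
    · simp [h]
    · simpa [h] using hpred k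
  · by_cases h1 : k < m
    · by_cases h2 : m ≤ Fintype.card I
      · have : {x : I → ℝ | k < m → m ≤ Fintype.card I →
            ¬ m ≤ (Finset.univ.filter fun i => x i ≤ α * m / (Fintype.card I)).card} =
            {x : I → ℝ | m ≤ (Finset.univ.filter fun i => x i ≤ α * m / (Fintype.card I)).card}ᶜ := by
          ext x; simp [h1, h2]
        rw [this]
        exact (hpred m).compl
      · have : {x : I → ℝ | k < m → m ≤ Fintype.card I →
            ¬ m ≤ (Finset.univ.filter fun i => x i ≤ α * m / (Fintype.card I)).card} = Set.univ := by
          ext x; simp [h2]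
        rw [this]; exact MeasurableSet.univ
    · have : {x : I → ℝ | k < m → m ≤ Fintype.card I →
          ¬ m ≤ (Finset.univ.filter fun i => x i ≤ α * m / (Fintype.card I)).card} = Set.univ := by
        ext x; simp [h1]
      rw [this]; exact MeasurableSet.univ

end Meas

section MeasQ
variable {V : Type*} [Fintype V] (G : SimpleGraph V) (n : V → ℕ)

lemma measurable_quteMasked (c : ℕ) (b : V) :
    Measurable (fun x : (Σ a : V, Fin (n a)) → ℝ => quteMasked G n c x b) := by
  apply measurable_pi_lambda
  intro i
  unfold quteMasked
  by_cases h : G.edist b i.1 ≤ c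
  · simpa [h] using measurable_pi_apply i
  · simpa [h] using measurable_const

lemma measurable_quteK (c : ℕ) (α : ℝ) (i : (Σ a : V, Fin (n a))) :
    Measurable (fun x : (Σ a : V, Fin (n a)) → ℝ => quteK G n c α x i) := by
  classical
  unfold quteK
  have : ∀ (s : Finset V), Measurable (fun x : (Σ a : V, Fin (n a)) → ℝ =>
      s.sup fun b => if G.edist i.1 b ≤ c then bhCount α (quteMasked G n c x b) else 0) := by
    intro s
    induction s using Finset.induction_on with
    | empty => simpa using measurable_const
    | @insert b s hb ih =>
        simp only [Finset.sup_insert]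
        refine Measurable.max ?_ ih
        by_cases h : G.edist i.1 b ≤ c
        · simp only [h, ↓reduceIte]
          exact (measurable_bhCount α).comp (measurable_quteMasked G n c b)
        · simpa [h] using measurable_const
  exact this Finset.univ

end MeasQ

section PerNull
variable {V : Type*} [Fintype V] (G : SimpleGraph V) (n : V → ℕ)
  {Ω : Type*} [MeasurableSpace Ω] (μ : Measure Ω) [IsProbabilityMeasure μ]

lemma per_null_bound
    (hN : 0 < Fintype.card (Σ a : V, Fin (n a)))
    (P : Ω → (Σ a : V, Fin (n a)) → ℝ)
    (hPmeas : ∀ i, Measurable fun ω => P ω i)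
    {α : ℝ} (hα : α ∈ Set.Ioo (0:ℝ) 1)
    (i : (Σ a : V, Fin (n a)))
    (hnulli : ∀ u ∈ Set.Icc (0:ℝ) 1, μ {ω | P ω i ≤ u} ≤ ENNReal.ofReal u)
    (hPRDSi : ∀ D : Set ((Σ a : V, Fin (n a)) → ℝ), MeasurableSet D →
      (∀ x ∈ D, ∀ y ∈ Set.Icc (0 : (Σ a : V, Fin (n a)) → ℝ) 1, x ≤ y → y ∈ D) →
      ∀ s t : ℝ, 0 < s → s ≤ t → t ≤ 1 → 0 < μ {ω | P ω i ≤ s} →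
        (μ[|{ω | P ω i ≤ s}]) {ω | P ω ∈ D} ≤ (μ[|{ω | P ω i ≤ t}]) {ω | P ω ∈ D}) :
    ∑ k ∈ Finset.range (Fintype.card (Σ a : V, Fin (n a)) + 1),
      ((1 : ℝ) / (max k 1 : ℕ)) *
        (μ {ω | P ω i ≤ α * k / (Fintype.card (Σ a : V, Fin (n a))) ∧
             quteK G n 1 α (P ω) i = k}).toReal
      ≤ α / (Fintype.card (Σ a : V, Fin (n a))) := by
  classical
  obtain ⟨hα0, hα1⟩ := hα
  set N := Fintype.card (Σ a : V, Fin (n a)) with hNdef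
  have hNR : (0:ℝ) < (N:ℝ) := by exact_mod_cast hN
  set s : ℕ → ℝ := fun k => α * k / N with hs
  set Kf : Ω → ℕ := fun ω => quteK G n 1 α (P ω) i with hKf
  have hKmeas : Measurable Kf :=
    (measurable_quteK G n 1 α i).comp (measurable_pi_lambda _ hPmeas)
  set E : ℕ → Set Ω := fun k => {ω | P ω i ≤ s k} with hE
  set T : ℕ → Set Ω := fun k => {ω | Kf ω ≤ k} with hT
  set A : ℕ → Set Ω := fun k => {ω | P ω i ≤ s k ∧ Kf ω = k} with hA
  have hEm : ∀ k, MeasurableSet (E k) := fun k => measurableSet_le (hPmeas i) measurable_const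
  have hTm : ∀ k, MeasurableSet (T k) := fun k => hKmeas (measurableSet_nat {m : ℕ | m ≤ k})
  have hAm : ∀ k, MeasurableSet (A k) := by
    intro k
    have : A k = E k ∩ {ω | Kf ω = k} := by ext ω; simp [hA, hE, Set.mem_setOf_eq]
    rw [this]
    exact (hEm k).inter (hKmeas (measurableSet_nat {k}))
  have hTmono : ∀ {j k : ℕ}, j ≤ k → T j ⊆ T k := by
    intro j k hjk ω hω
    exact le_trans hω (by exact_mod_cast hjk)
  have hEmono : ∀ {j k : ℕ}, j ≤ k → E j ⊆ E k := by
    intro j k hjk ω hω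
    show P ω i ≤ s k
    refine le_trans (show P ω i ≤ s j from hω) ?_
    have : α * (j:ℝ) ≤ α * k := mul_le_mul_of_nonneg_left (by exact_mod_cast hjk) hα0.le
    exact div_le_div_of_nonneg_right this hNR.le
  have hsk_mem : ∀ k, k ≤ N → s k ∈ Set.Icc (0:ℝ) 1 := by
    intro k hk
    constructor
    · have : (0:ℝ) ≤ α * k := by positivity
      positivity
    · rw [hs, div_le_one hNR]
      calc α * (k:ℝ) ≤ 1 * N := by
            apply mul_le_mul hα1.le (by exact_mod_cast hk) (by positivity) zero_le_one
        _ = N := one_mul _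
  have hq_le : ∀ k, k ≤ N → (μ (E k)).toReal ≤ s k := by
    intro k hk
    have h1 := hnulli (s k) (hsk_mem k hk)
    calc (μ (E k)).toReal ≤ (ENNReal.ofReal (s k)).toReal :=
          ENNReal.toReal_mono ENNReal.ofReal_ne_top h1
      _ = s k := ENNReal.toReal_ofReal (hsk_mem k hk).1
  have hE0 : μ (E 0) = 0 := by
    refine le_antisymm ?_ zero_le
    have h1 := hnulli 0 ⟨le_rfl, zero_le_one⟩
    have : E 0 = {ω | P ω i ≤ 0} := by simp [hE, hs]
    rw [this]
    simpa using h1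
  set g : ℕ → ℝ := fun k => (μ (E k ∩ T k)).toReal / (μ (E k)).toReal with hg
  have hg_nonneg : ∀ k, 0 ≤ g k := fun k => by positivity
  have hg_le_one : ∀ k, g k ≤ 1 := by
    intro k
    by_cases h : (μ (E k)).toReal = 0
    · simp [hg, h]
    · rw [hg]
      apply div_le_one_of_le₀
      · exact ENNReal.toReal_mono (measure_ne_top μ _) (measure_mono Set.inter_subset_left)
      · positivity
  have hcore : ∀ m j k : ℕ, 1 ≤ j → j ≤ k → k ≤ N → μ (E j) ≠ 0 →
      (μ (E j ∩ T m)).toReal / (μ (E j)).toReal ≤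
        (μ (E k ∩ T m)).toReal / (μ (E k)).toReal := by
    intro m j k hj hjk hkN hEj
    set D : Set ((Σ a : V, Fin (n a)) → ℝ) := {x | quteK G n 1 α x i ≤ m} with hD
    have hDm : MeasurableSet D := (measurable_quteK G n 1 α i) (measurableSet_nat {t : ℕ | t ≤ m})
    have hDup : ∀ x ∈ D, ∀ y ∈ Set.Icc (0 : (Σ a : V, Fin (n a)) → ℝ) 1, x ≤ y → y ∈ D := by
      intro x hx y _ hxy
      exact le_trans (quteK_anti G n hα0.le 1 hxy i) hx
    have hsj_pos : 0 < s j := by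
      rw [hs]
      apply div_pos (mul_pos hα0 (by exact_mod_cast hj)) hNR
    have hsjk : s j ≤ s k := by
      rw [hs]
      exact div_le_div_of_nonneg_right
        (mul_le_mul_of_nonneg_left (by exact_mod_cast hjk) hα0.le) hNR.le
    have hpos : 0 < μ {ω | P ω i ≤ s j} := pos_iff_ne_zero.mpr hEj
    have hP := hPRDSi D hDm hDup (s j) (s k) hsj_pos hsjk (hsk_mem k hkN).2 hpos
    rw [cond_apply (hEm j), cond_apply (hEm k)] at hP
    have hEk : μ (E k) ≠ 0 := by
      intro h
      exact hEj (le_antisymm (h ▸ measure_mono (hEmono hjk)) zero_le)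
    have hfin : (μ (E k))⁻¹ * μ (E k ∩ {ω | P ω ∈ D}) ≠ ⊤ :=
      ENNReal.mul_ne_top (ENNReal.inv_ne_top.mpr hEk) (measure_ne_top μ _)
    have h2 := ENNReal.toReal_mono hfin hP
    rw [ENNReal.toReal_mul, ENNReal.toReal_mul, ENNReal.toReal_inv, ENNReal.toReal_inv] at h2
    rw [div_eq_inv_mul, div_eq_inv_mul]
    have hPD : {ω | P ω ∈ D} = T m := rfl
    rw [hPD] at h2
    exact h2
  have hk2of : ∀ k : ℕ, 1 ≤ k → μ (E (k-1)) ≠ 0 → 1 ≤ k - 1 := by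
    intro k hk1 h0
    rcases Nat.lt_or_ge k 2 with h | h
    · interval_cases k
      · simp at h0
        exact absurd hE0 h0
    · omega
  have hg_mono : ∀ k, 1 ≤ k → k ≤ N → g (k-1) ≤ g k := by
    intro k hk1 hkN
    by_cases h0 : μ (E (k-1)) = 0
    · have hnum : μ (E (k-1) ∩ T (k-1)) = 0 :=
        measure_mono_null Set.inter_subset_left h0
      rw [hg]
      simp only [hnum]
      rw [ENNReal.toReal_zero, zero_div]
      exact hg_nonneg k
    · have step := hcore (k-1) (k-1) k (hk2of k hk1 h0) (Nat.sub_le k 1) hkN h0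
      refine step.trans ?_
      apply div_le_div_of_nonneg_right ?_ (by positivity)
      exact ENNReal.toReal_mono (measure_ne_top μ _)
        (measure_mono (Set.inter_subset_inter_right _ (hTmono (Nat.sub_le k 1))))
  have hkey : ∀ k, 1 ≤ k → k ≤ N →
      (μ (A k)).toReal ≤ (μ (E k)).toReal * (g k - g (k-1)) := by
    intro k hk1 hkN
    have hsub1 : A k ⊆ E k ∩ T k := fun ω hω => ⟨hω.1, le_of_eq hω.2⟩
    have hdisj : Disjoint (E k ∩ T (k-1)) (A k) := by
      rw [Set.disjoint_left]
      intro ω h1 h2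
      have ha : Kf ω ≤ k - 1 := h1.2
      have hb : Kf ω = k := h2.2
      omega
    have hunion : μ (E k ∩ T (k-1)) + μ (A k) ≤ μ (E k ∩ T k) := by
      rw [← measure_union hdisj (hAm k)]
      apply measure_mono
      apply Set.union_subset (Set.inter_subset_inter_right _ (hTmono (Nat.sub_le k 1))) hsub1
    have h1 : (μ (E k ∩ T (k-1))).toReal + (μ (A k)).toReal ≤ (μ (E k ∩ T k)).toReal := by
      rw [← ENNReal.toReal_add (measure_ne_top μ _) (measure_ne_top μ _)]
      exact ENNReal.toReal_mono (measure_ne_top μ _) hunion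
    have hBk : (μ (E k ∩ T k)).toReal ≤ (μ (E k)).toReal * g k := by
      by_cases h : (μ (E k)).toReal = 0
      · have : μ (E k) = 0 := by
          have := measure_ne_top μ (E k)
          exact (ENNReal.toReal_eq_zero_iff _).mp h |>.resolve_right this
        have hnum : μ (E k ∩ T k) = 0 := measure_mono_null Set.inter_subset_left this
        simp [hnum, h]
      · rw [hg, mul_comm, div_mul_cancel₀ _ h]
    have hB' : (μ (E k)).toReal * g (k-1) ≤ (μ (E k ∩ T (k-1))).toReal := by
      by_cases h0 : μ (E (k-1)) = 0
      · have hnum : μ (E (k-1) ∩ T (k-1)) = 0 :=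
          measure_mono_null Set.inter_subset_left h0
        have : g (k-1) = 0 := by
          rw [hg]
          simp [hnum]
        rw [this, mul_zero]
        positivity
      · have step := hcore (k-1) (k-1) k (hk2of k hk1 h0) (Nat.sub_le k 1) hkN h0
        have hEkpos : 0 < (μ (E k)).toReal := by
          apply ENNReal.toReal_pos _ (measure_ne_top μ _)
          intro h
          exact h0 (le_antisymm (h ▸ measure_mono (hEmono (Nat.sub_le k 1))) zero_le)
        rw [mul_comm, ← le_div_iff₀ hEkpos]
        exact step
    have hring : (μ (E k)).toReal * (g k - g (k-1)) =
        (μ (E k)).toReal * g k - (μ (E k)).toReal * g (k-1) := by ring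
    linarith
  -- now the sum
  have hA0 : (μ (A 0)).toReal = 0 := by
    have : μ (A 0) = 0 := measure_mono_null (fun ω hω => hω.1) hE0
    simp [this]
  have hsplit : Finset.range (N+1) = insert 0 (Finset.Ico 1 (N+1)) := by
    ext x
    simp only [Finset.mem_range, Finset.mem_insert, Finset.mem_Ico]
    omega
  rw [hsplit, Finset.sum_insert (by simp)]
  have hzero : ((1:ℝ) / (max 0 1 : ℕ)) * (μ (A 0)).toReal = 0 := by
    rw [hA0, mul_zero]
  rw [hzero, zero_add]
  have hterm : ∀ k ∈ Finset.Ico 1 (N+1),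
      ((1:ℝ) / (max k 1 : ℕ)) * (μ (A k)).toReal ≤ (α / N) * (g k - g (k-1)) := by
    intro k hk
    rw [Finset.mem_Ico] at hk
    obtain ⟨hk1, hkN'⟩ := hk
    have hkN : k ≤ N := by omega
    have hmax : max k 1 = k := max_eq_left hk1
    rw [hmax]
    have hkR : (0:ℝ) < (k:ℝ) := by exact_mod_cast hk1
    have hdiff : 0 ≤ g k - g (k-1) := sub_nonneg.mpr (hg_mono k hk1 hkN)
    calc ((1:ℝ)/(k:ℕ)) * (μ (A k)).toReal
        ≤ (1/(k:ℝ)) * ((μ (E k)).toReal * (g k - g (k-1))) := by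
          apply mul_le_mul_of_nonneg_left (hkey k hk1 hkN) (by positivity)
      _ ≤ (1/(k:ℝ)) * (s k * (g k - g (k-1))) := by
          apply mul_le_mul_of_nonneg_left
            (mul_le_mul_of_nonneg_right (hq_le k hkN) hdiff) (by positivity)
      _ = (α / N) * (g k - g (k-1)) := by
          rw [hs]
          field_simp
  calc ∑ k ∈ Finset.Ico 1 (N+1), ((1:ℝ)/(max k 1 : ℕ)) * (μ (A k)).toReal
      ≤ ∑ k ∈ Finset.Ico 1 (N+1), (α / N) * (g k - g (k-1)) := Finset.sum_le_sum hterm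
    _ = (α / N) * ∑ k ∈ Finset.Ico 1 (N+1), (g k - g (k-1)) := by rw [Finset.mul_sum]
    _ = (α / N) * (g N - g 0) := by
        congr 1
        rw [Finset.sum_Ico_eq_sum_range]
        simp only [Nat.add_sub_cancel]
        have : ∀ k, g (1 + k) - g (1 + k - 1) = g (k+1) - g k := by
          intro k
          congr 2 <;> omega
        rw [Finset.sum_congr rfl (fun k _ => this k)]
        exact Finset.sum_range_sub g N
    _ ≤ (α / N) * 1 := by
        apply mul_le_mul_of_nonneg_left _ (by positivity)
        have := hg_le_one N
        have := hg_nonneg 0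
        linarith
    _ = α / N := mul_one _

end PerNull

/-- **Theorem 1 (FDR control of single-step QuTE, positively dependent p-values).**
For every graph `G` and level `α ∈ (0,1)`, if the vector of `N` p-values is PRDS on each null
and every null p-value is superuniform, then single-step QuTE (`c = 1`) at level `α`
satisfies `FDR ≤ α |H⁰| / N`. -/
theorem qute_single_step_fdr_control_prds
    {V : Type*} [Fintype V] [DecidableEq V] [Nonempty V] (G : SimpleGraph V)
    (n : V → ℕ) (hn : ∀ a, 1 ≤ n a)
    {Ω : Type*} [MeasurableSpace Ω] (μ : Measure Ω) [IsProbabilityMeasure μ]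
    (P : Ω → (Σ a : V, Fin (n a)) → ℝ)
    (hPmeas : ∀ i, Measurable fun ω => P ω i)
    (hPrange : ∀ ω i, P ω i ∈ Set.Icc (0 : ℝ) 1)
    (H0 : Finset (Σ a : V, Fin (n a)))
    (hnull : ∀ i ∈ H0, ∀ u ∈ Set.Icc (0 : ℝ) 1,
      μ {ω | P ω i ≤ u} ≤ ENNReal.ofReal u)
    -- PRDS on each null: for every measurable nondecreasing set `D ⊆ [0,1]^N` and
    -- all `0 < s ≤ t ≤ 1` with `Pr(P i ≤ s) > 0`,
    -- `Pr(P ∈ D | P i ≤ s) ≤ Pr(P ∈ D | P i ≤ t)`.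
    (hPRDS : ∀ i ∈ H0, ∀ D : Set ((Σ a : V, Fin (n a)) → ℝ), MeasurableSet D →
      (∀ x ∈ D, ∀ y ∈ Set.Icc (0 : (Σ a : V, Fin (n a)) → ℝ) 1, x ≤ y → y ∈ D) →
      ∀ s t : ℝ, 0 < s → s ≤ t → t ≤ 1 → 0 < μ {ω | P ω i ≤ s} →
        (μ[|{ω | P ω i ≤ s}]) {ω | P ω ∈ D} ≤ (μ[|{ω | P ω i ≤ t}]) {ω | P ω ∈ D})
    (α : ℝ) (hα : α ∈ Set.Ioo (0 : ℝ) 1) :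
    ∫ ω, (((quteRej G n 1 α (P ω) ∩ H0).card : ℝ) /
        (max ((quteRej G n 1 α (P ω)).card) 1 : ℕ)) ∂μ
      ≤ α * H0.card / Fintype.card (Σ a : V, Fin (n a)) := by
  classical
  obtain ⟨hα0, hα1⟩ := hα
  have hNe : Nonempty (Σ a : V, Fin (n a)) := by
    obtain ⟨a⟩ := ‹Nonempty V›
    exact ⟨⟨a, ⟨0, hn a⟩⟩⟩
  have hN : 0 < Fintype.card (Σ a : V, Fin (n a)) := Fintype.card_pos_iff.mpr hNe
  set N := Fintype.card (Σ a : V, Fin (n a)) with hNdef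
  have hNR : (0:ℝ) < (N:ℝ) := by exact_mod_cast hN
  have hKmeas : ∀ i, Measurable fun ω => quteK G n 1 α (P ω) i := fun i =>
    (measurable_quteK G n 1 α i).comp (measurable_pi_lambda _ hPmeas)
  set A : (Σ a : V, Fin (n a)) → ℕ → Set Ω := fun i k =>
    {ω | P ω i ≤ α * k / N ∧ quteK G n 1 α (P ω) i = k} with hA
  have hAm : ∀ i k, MeasurableSet (A i k) := by
    intro i k
    have : A i k = {ω | P ω i ≤ α * k / N} ∩
        ((fun ω => quteK G n 1 α (P ω) i) ⁻¹' {k}) := by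
      ext ω; simp [hA, Set.mem_setOf_eq]
    rw [this]
    exact (measurableSet_le (hPmeas i) measurable_const).inter
      ((hKmeas i) (measurableSet_nat {k}))
  set Gf : Ω → ℝ := fun ω => ∑ i ∈ H0, ∑ k ∈ Finset.range (N+1),
      (A i k).indicator (fun _ => ((1:ℝ) / (max k 1 : ℕ))) ω with hGf
  have hGint : Integrable Gf μ := by
    apply integrable_finset_sum
    intro i _
    apply integrable_finset_sum
    intro k _
    exact (integrable_const _).indicator (hAm i k)
  have hpt : ∀ ω, (((quteRej G n 1 α (P ω) ∩ H0).card : ℝ) /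
      (max ((quteRej G n 1 α (P ω)).card) 1 : ℕ)) ≤ Gf ω := by
    intro ω
    have hDnpos : (0:ℝ) < ((max (quteRej G n 1 α (P ω)).card 1 : ℕ) : ℝ) := by
      exact_mod_cast Nat.lt_of_lt_of_le Nat.zero_lt_one (le_max_right _ _)
    have hcard : ((quteRej G n 1 α (P ω) ∩ H0).card : ℝ) =
        ∑ i ∈ H0, if i ∈ quteRej G n 1 α (P ω) then (1:ℝ) else 0 := by
      rw [Finset.inter_comm, ← Finset.filter_mem_eq_inter, Finset.card_filter]
      push_cast
      rfl
    rw [hcard, Finset.sum_div]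
    apply Finset.sum_le_sum
    intro i hi
    by_cases h : i ∈ quteRej G n 1 α (P ω)
    · rw [if_pos h]
      set κ := quteK G n 1 α (P ω) i with hκ
      have hκN : κ ≤ N := quteK_le_card G n 1 α (P ω) i
      have hκmem : κ ∈ Finset.range (N+1) := by
        rw [Finset.mem_range]; omega
      have hx : P ω i ≤ α * κ / N := le_of_mem_quteRej G n hα0.le hN h
      have hωA : ω ∈ A i κ := ⟨hx, rfl⟩
      have hval : (A i κ).indicator (fun _ => ((1:ℝ) / (max κ 1 : ℕ))) ω =
          ((1:ℝ) / (max κ 1 : ℕ)) := Set.indicator_of_mem hωA _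
      have hstep : ((1:ℝ) / (max (quteRej G n 1 α (P ω)).card 1 : ℕ)) ≤
          ((1:ℝ) / (max κ 1 : ℕ)) := by
        apply one_div_le_one_div_of_le
        · exact_mod_cast Nat.lt_of_lt_of_le Nat.zero_lt_one (le_max_right _ _)
        · have hκR : κ ≤ (quteRej G n 1 α (P ω)).card :=
            quteK_le_card_quteRej G n hα0.le hα1 hN 1 (P ω) i
          exact_mod_cast max_le_max hκR le_rfl
      calc (1:ℝ) / (max (quteRej G n 1 α (P ω)).card 1 : ℕ)
          ≤ ((1:ℝ) / (max κ 1 : ℕ)) := hstep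
        _ = (A i κ).indicator (fun _ => ((1:ℝ) / (max κ 1 : ℕ))) ω := hval.symm
        _ ≤ ∑ k ∈ Finset.range (N+1),
              (A i k).indicator (fun _ => ((1:ℝ) / (max k 1 : ℕ))) ω := by
            apply Finset.single_le_sum (f := fun k =>
              (A i k).indicator (fun _ => ((1:ℝ) / (max k 1 : ℕ))) ω) _ hκmem
            intro k _
            apply Set.indicator_nonneg
            intro _ _
            positivity
    · rw [if_neg h, zero_div]
      apply Finset.sum_nonneg
      intro k _
      apply Set.indicator_nonneg
      intro _ _
      positivity
  have hnn : ∀ ω, 0 ≤ (((quteRej G n 1 α (P ω) ∩ H0).card : ℝ) /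
      (max ((quteRej G n 1 α (P ω)).card) 1 : ℕ)) := by
    intro ω
    exact div_nonneg (Nat.cast_nonneg _) (Nat.cast_nonneg _)
  have hint : ∫ ω, Gf ω ∂μ = ∑ i ∈ H0, ∑ k ∈ Finset.range (N+1),
      ((1:ℝ) / (max k 1 : ℕ)) * (μ (A i k)).toReal := by
    rw [hGf]
    rw [integral_finset_sum _ (fun i _ => integrable_finset_sum _
      (fun k _ => (integrable_const _).indicator (hAm i k)))]
    refine Finset.sum_congr rfl (fun i _ => ?_)
    rw [integral_finset_sum _ (fun k _ => (integrable_const _).indicator (hAm i k))]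
    refine Finset.sum_congr rfl (fun k _ => ?_)
    rw [integral_indicator_const _ (hAm i k), smul_eq_mul, mul_comm]
    rfl
  calc ∫ ω, (((quteRej G n 1 α (P ω) ∩ H0).card : ℝ) /
        (max ((quteRej G n 1 α (P ω)).card) 1 : ℕ)) ∂μ
      ≤ ∫ ω, Gf ω ∂μ :=
        integral_mono_of_nonneg (Filter.Eventually.of_forall hnn) hGint
          (Filter.Eventually.of_forall hpt)
    _ = ∑ i ∈ H0, ∑ k ∈ Finset.range (N+1),
          ((1:ℝ) / (max k 1 : ℕ)) * (μ (A i k)).toReal := hint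
    _ ≤ ∑ i ∈ H0, α / N := by
        apply Finset.sum_le_sum
        intro i hi
        exact per_null_bound G n μ hN P hPmeas ⟨hα0, hα1⟩ i (hnull i hi) (hPRDS i hi)
    _ = (H0.card : ℝ) * (α / N) := by
        rw [Finset.sum_const, nsmul_eq_mul]
    _ = α * H0.card / N := by ring
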